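/- Let K/F be a cyclic cubic extension of fields with Gal(K/F) = ⟨σ⟩, let t ∈ F, and let α ∈ K be a root of g(x;t) = x³ + t·x² − (t+3)·x + 1 with α ∉ F. Then N_{K/F}(α − σ(α))² = (t² + 3t + 9)², i.e. N_{K/F}(α − σ(α)) = ±δ(g). -/

import Mathlib

/-- Let `K/F` be a cyclic cubic extension with `Gal(K/F) = ⟨σ⟩`, and let `α ∈ K \ F` be a
root of the generic polynomial `g(x;t) = x³ + t·x² − (t+3)·x + 1`. Then
`N_{K/F}(α − σ(α))² = (t² + 3t + 9)²`, i.e. `N_{K/F}(α − σ(α)) = ±δ(g)`. -/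
theorem stmt_5 (F K : Type*) [Field F] [Field K] [Algebra F K] [IsGalois F K]
    (hdeg : Module.finrank F K = 3)
    (σ : K ≃ₐ[F] K) (hσ : ∀ τ : K ≃ₐ[F] K, τ ∈ Subgroup.zpowers σ)
    (t : F) (α : K)
    (hα : α ^ 3 + algebraMap F K t * α ^ 2 - (algebraMap F K t + 3) * α + 1 = 0)
    (hα' : α ∉ Set.range (algebraMap F K)) :
    (Algebra.norm F (α - σ α)) ^ 2 = (t ^ 2 + 3 * t + 9) ^ 2 := by
  classical
  haveI : FiniteDimensional F K := Module.finite_of_finrank_pos (by rw [hdeg]; norm_num)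
  have hcard : Fintype.card (K ≃ₐ[F] K) = 3 := by
    rw [← Nat.card_eq_fintype_card, IsGalois.card_aut_eq_finrank, hdeg]
  have horder : orderOf σ = 3 := by
    have h := orderOf_eq_card_of_forall_mem_zpowers hσ
    rwa [Nat.card_eq_fintype_card, hcard] at h
  have hσ3 : σ ^ 3 = 1 := by rw [← horder]; exact pow_orderOf_eq_one σ
  have hcyc : σ (σ (σ α)) = α := by
    have h := congrArg (fun f : K ≃ₐ[F] K => f α) hσ3
    simpa [pow_succ, AlgEquiv.mul_apply] using h
  -- σ α ≠ α
  have hfix : σ α ≠ α := by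
    intro h
    apply hα'
    have hmem : α ∈ IntermediateField.fixedField (⊤ : Subgroup (K ≃ₐ[F] K)) := by
      rintro ⟨τ, -⟩
      obtain ⟨k, hk⟩ := hσ τ
      have hstab : σ ∈ MulAction.stabilizer (K ≃ₐ[F] K) α := h
      have h2 : σ ^ k ∈ MulAction.stabilizer (K ≃ₐ[F] K) α :=
        Subgroup.zpow_mem _ hstab k
      show τ • α = α
      rw [← hk]
      exact h2
    have hbot : IntermediateField.fixedField (⊤ : Subgroup (K ≃ₐ[F] K)) = ⊥ :=
      ((IsGalois.tfae (F := F) (E := K)).out 0 1).mp (inferInstance : IsGalois F K)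
    rw [hbot, IntermediateField.mem_bot] at hmem
    exact hmem
  -- distinctness of the roots
  have hab : α ≠ σ α := fun h => hfix h.symm
  have hbc : σ α ≠ σ (σ α) := fun h => hfix (σ.injective h).symm
  have hca : σ (σ α) ≠ α := by
    intro h
    apply hfix
    have h2 := congrArg σ h
    rw [hcyc] at h2
    exact h2.symm
  -- the conjugates are roots too
  have hstep : ∀ x : K, x ^ 3 + algebraMap F K t * x ^ 2 - (algebraMap F K t + 3) * x + 1 = 0 →
      (σ x) ^ 3 + algebraMap F K t * (σ x) ^ 2 - (algebraMap F K t + 3) * (σ x) + 1 = 0 := by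
    intro x hx
    have h3 : σ (3 : K) = 3 := map_ofNat σ 3
    have hT : σ (algebraMap F K t) = algebraMap F K t := σ.commutes t
    have h := congrArg σ hx
    simpa only [map_add, map_sub, map_mul, map_pow, map_one, map_zero, h3, hT] using h
  have hbroot := hstep α hα
  have hcroot := hstep (σ α) hbroot
  -- elementary symmetric functions
  have q1 : α ^ 2 + α * σ α + (σ α) ^ 2 + algebraMap F K t * (α + σ α)
      - (algebraMap F K t + 3) = 0 := by
    have h0 : (α - σ α) * (α ^ 2 + α * σ α + (σ α) ^ 2 + algebraMap F K t * (α + σ α)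
        - (algebraMap F K t + 3)) = 0 := by
      linear_combination hα - hbroot
    rcases mul_eq_zero.mp h0 with h | h
    · exact absurd (sub_eq_zero.mp h) hab
    · exact h
  have q2 : (σ α) ^ 2 + σ α * σ (σ α) + (σ (σ α)) ^ 2 + algebraMap F K t * (σ α + σ (σ α))
      - (algebraMap F K t + 3) = 0 := by
    have h0 : (σ α - σ (σ α)) * ((σ α) ^ 2 + σ α * σ (σ α) + (σ (σ α)) ^ 2
        + algebraMap F K t * (σ α + σ (σ α)) - (algebraMap F K t + 3)) = 0 := by
      linear_combination hbroot - hcroot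
    rcases mul_eq_zero.mp h0 with h | h
    · exact absurd (sub_eq_zero.mp h) hbc
    · exact h
  have he1 : α + σ α + σ (σ α) = -(algebraMap F K t) := by
    have h0 : (α - σ (σ α)) * (α + σ α + σ (σ α) + algebraMap F K t) = 0 := by
      linear_combination q1 - q2
    rcases mul_eq_zero.mp h0 with h | h
    · exact absurd (sub_eq_zero.mp h).symm hca
    · linear_combination h
  have he2 : α * σ α + σ α * σ (σ α) + σ (σ α) * α = -(algebraMap F K t + 3) := by
    linear_combination (α + σ α) * he1 - q1
  have he3 : α * σ α * σ (σ α) = -1 := by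
    linear_combination σ (σ α) * he2 - (σ (σ α)) ^ 2 * he1 + hcroot
  -- discriminant identity
  have idP : ((α - σ α) * (σ α - σ (σ α)) * (σ (σ α) - α)) ^ 2 =
      (α + σ α + σ (σ α)) ^ 2 * (α * σ α + σ α * σ (σ α) + σ (σ α) * α) ^ 2
        - 4 * (α * σ α + σ α * σ (σ α) + σ (σ α) * α) ^ 3
        - 4 * (α + σ α + σ (σ α)) ^ 3 * (α * σ α * σ (σ α))
        + 18 * (α + σ α + σ (σ α)) * (α * σ α + σ α * σ (σ α) + σ (σ α) * α)
            * (α * σ α * σ (σ α))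
        - 27 * (α * σ α * σ (σ α)) ^ 2 := by ring
  have hP : ((α - σ α) * (σ α - σ (σ α)) * (σ (σ α) - α)) ^ 2 =
      ((algebraMap F K t) ^ 2 + 3 * algebraMap F K t + 9) ^ 2 := by
    rw [idP, he1, he2, he3]; ring
  -- identify the Galois group
  have hdist1 : σ ≠ 1 := by
    intro h; rw [h, orderOf_one] at horder; norm_num at horder
  have hdist2 : σ ^ 2 ≠ 1 := by
    intro h
    have h2 := orderOf_dvd_of_pow_eq_one h
    rw [horder] at h2
    norm_num at h2
  have hdist3 : σ ≠ σ ^ 2 := by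
    intro h
    apply hdist1
    have h2 : σ * σ = σ * 1 := by rw [mul_one, ← sq]; exact h.symm
    exact mul_left_cancel h2
  have huniv : (Finset.univ : Finset (K ≃ₐ[F] K)) = ({1, σ, σ ^ 2} : Finset (K ≃ₐ[F] K)) := by
    symm
    apply Finset.eq_univ_of_card
    rw [hcard]
    rw [Finset.card_insert_of_notMem (by simp [hdist1.symm, Ne.symm hdist2]),
      Finset.card_insert_of_notMem (by simp [hdist3]), Finset.card_singleton]
  have hN := Algebra.norm_eq_prod_automorphisms (K := F) (x := α - σ α)
  rw [huniv, Finset.prod_insert (by simp [hdist1.symm, Ne.symm hdist2]),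
    Finset.prod_insert (by simp [hdist3]), Finset.prod_singleton] at hN
  have hprod : algebraMap F K (Algebra.norm F (α - σ α))
      = (α - σ α) * (σ α - σ (σ α)) * (σ (σ α) - α) := by
    rw [hN]
    have h1 : (1 : K ≃ₐ[F] K) (α - σ α) = α - σ α := rfl
    have h2 : σ (α - σ α) = σ α - σ (σ α) := by rw [map_sub]
    have h3 : (σ ^ 2) (α - σ α) = σ (σ α) - α := by
      rw [sq, AlgEquiv.mul_apply, map_sub, map_sub, hcyc]
    rw [h1, h2, h3]
    ring
  apply (algebraMap F K).injective
  rw [map_pow, hprod, hP, map_pow]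
  congr 1
  rw [map_add, map_add, map_mul, map_pow, map_ofNat, map_ofNat]
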